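/- Let P(X) = X⁴ + bX² + d be a polynomial over a field K of characteristic ≠ 2 with roots ±α, ±β in a splitting field. Then P is irreducible over K if and only if none of b² - 4d, -b + 2√d, -b - 2√d is a square in K (where √d denotes a fixed square root of d in the splitting field, interpreted so that the latter two conditions mean α + β ∉ K and α - β ∉ K). -/

import Mathlib

open Polynomial

lemma root_mem_stmt1 {L : Type*} [Field L] {x α β : L}
    (h : (x - α) * (x + α) * (x - β) * (x + β) = 0) :
    x = α ∨ x = -α ∨ x = β ∨ x = -β := by
  rcases mul_eq_zero.mp h with h' | h'
  · rcases mul_eq_zero.mp h' with h'' | h''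
    · rcases mul_eq_zero.mp h'' with h3 | h3
      · exact Or.inl (sub_eq_zero.mp h3)
      · exact Or.inr (Or.inl (eq_neg_of_add_eq_zero_left h3))
    · exact Or.inr (Or.inr (Or.inl (sub_eq_zero.mp h'')))
  · exact Or.inr (Or.inr (Or.inr (eq_neg_of_add_eq_zero_left h')))

lemma aux_deg2_stmt1 {R : Type*} [CommRing R] {f : R[X]} (hm : f.Monic) (h2 : f.natDegree = 2) :
    f = X ^ 2 + C (f.coeff 1) * X + C (f.coeff 0) := by
  ext n
  have hc2 : f.coeff 2 = 1 := by simpa [h2] using hm.coeff_natDegree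
  match n with
  | 0 => simp [coeff_X_pow]
  | 1 => simp [coeff_X_pow]
  | 2 => simp [coeff_X_pow, hc2]
  | (n+3) =>
    rw [coeff_eq_zero_of_natDegree_lt (by omega : f.natDegree < n + 3)]
    simp [coeff_X_pow, coeff_C]

lemma aux_deg1_stmt1 {R : Type*} [CommRing R] {f : R[X]} (hm : f.Monic) (h1 : f.natDegree = 1) :
    f = X + C (f.coeff 0) := by
  ext n
  have hc1 : f.coeff 1 = 1 := by simpa [h1] using hm.coeff_natDegree
  match n with
  | 0 => simp
  | 1 => simp [hc1]
  | (n+2) =>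
    rw [coeff_eq_zero_of_natDegree_lt (by omega : f.natDegree < n + 2)]
    simp [coeff_C, coeff_X]

lemma aux_no_factor_stmt1 {K : Type*} [Field K] {P g : K[X]} (hirr : Irreducible P)
    (hP : P.natDegree = 4) (hg : g.natDegree = 2) (hdvd : g ∣ P) : False := by
  obtain ⟨w, hw⟩ := hdvd
  have hg0 : g ≠ 0 := fun h => by rw [h] at hg; simp at hg
  rcases hirr.isUnit_or_isUnit hw with hu | hu
  · have := natDegree_eq_zero_of_isUnit hu; omega
  · have hw0 : w ≠ 0 := hu.ne_zero
    have h := natDegree_mul hg0 hw0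
    rw [← hw, hP, hg, natDegree_eq_zero_of_isUnit hu] at h
    omega

theorem stmt_1 (K L : Type*) [Field K] [Field L] [Algebra K L]
    (hchar : ringChar K ≠ 2) (b d : K) (α β : L)
    (hroots : (X ^ 4 + C b * X ^ 2 + C d).map (algebraMap K L)
      = (X - C α) * (X + C α) * (X - C β) * (X + C β)) :
    Irreducible (X ^ 4 + C b * X ^ 2 + C d) ↔
      (¬ ∃ c : K, c ^ 2 = b ^ 2 - 4 * d) ∧
      α + β ∉ Set.range (algebraMap K L) ∧
      α - β ∉ Set.range (algebraMap K L) := by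
  have h2K : (2:K) ≠ 0 := Ring.two_ne_zero hchar
  have inj : Function.Injective (algebraMap K L) := (algebraMap K L).injective
  have h2L : (2:L) ≠ 0 := by
    intro h
    exact h2K (inj (by rw [map_ofNat, map_zero]; exact h))
  have hmap : (X ^ 4 + C b * X ^ 2 + C d).map (algebraMap K L)
      = X ^ 4 + C (algebraMap K L b) * X ^ 2 + C (algebraMap K L d) := by
    simp
  have key : X ^ 4 + C (algebraMap K L b) * X ^ 2 + C (algebraMap K L d)
      = X ^ 4 - C (α ^ 2 + β ^ 2) * X ^ 2 + C (α ^ 2 * β ^ 2) := by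
    rw [← hmap, hroots]
    simp only [map_add, map_mul, map_pow]
    ring
  have hb : algebraMap K L b = -(α ^ 2 + β ^ 2) := by
    have h := congrArg (fun q => q.coeff 2) key
    simp only [coeff_add, coeff_sub, coeff_C_mul, coeff_X_pow, coeff_C] at h
    norm_num at h
    linear_combination h
  have hd : algebraMap K L d = α ^ 2 * β ^ 2 := by
    have h := congrArg (fun q => q.coeff 0) key
    simp only [coeff_add, coeff_sub, coeff_C_mul, coeff_X_pow, coeff_C] at h
    norm_num at h
    exact h
  have hdeg : (X ^ 4 + C b * X ^ 2 + C d).natDegree = 4 := by compute_degree!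
  have hmon : (X ^ 4 + C b * X ^ 2 + C d).Monic := by
    rw [Monic, leadingCoeff, hdeg]
    simp [coeff_X_pow]
  constructor
  · intro hirr
    refine ⟨?_, ?_, ?_⟩
    · rintro ⟨c, hc⟩
      have hu : C ((b+c)/2) + C ((b-c)/2) = C b := by
        rw [← C_add]; congr 1; field_simp; ring
      have hv : C ((b+c)/2) * C ((b-c)/2) = C d := by
        rw [← C_mul]; congr 1; field_simp; linear_combination -hc
      have hfac : (X^2 + C ((b+c)/2)) * (X^2 + C ((b-c)/2)) = X^4 + C b * X^2 + C d := by
        calc (X^2 + C ((b+c)/2)) * (X^2 + C ((b-c)/2))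
            = X^4 + (C ((b+c)/2) + C ((b-c)/2)) * X^2 + C ((b+c)/2) * C ((b-c)/2) := by ring
          _ = X^4 + C b * X^2 + C d := by rw [hu, hv]
      exact aux_no_factor_stmt1 hirr hdeg (by compute_degree!) ⟨_, hfac.symm⟩
    · rintro ⟨s, hs⟩
      have hq : algebraMap K L ((s^2+b)/2) = α * β := by
        have h1 : (2:K) * ((s^2+b)/2) = s^2 + b := by field_simp
        have h2 : algebraMap K L ((2:K) * ((s^2+b)/2)) = 2 * algebraMap K L ((s^2+b)/2) := by
          rw [map_mul, map_ofNat]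
        apply mul_left_cancel₀ h2L
        rw [← h2, h1, map_add, map_pow, hs, hb]; ring
      have hgmap : (X^2 - C s * X + C ((s^2+b)/2)).map (algebraMap K L) = (X - C α) * (X - C β) := by
        simp only [Polynomial.map_add, Polynomial.map_sub, Polynomial.map_mul,
          Polynomial.map_pow, map_X, map_C, hs, hq]
        rw [C_add, C_mul]; ring
      have hdvd : (X^2 - C s * X + C ((s^2+b)/2)) ∣ (X^4 + C b * X^2 + C d) := by
        rw [← map_dvd_map' (algebraMap K L), hgmap, hroots]
        exact ⟨(X + C α) * (X + C β), by ring⟩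
      exact aux_no_factor_stmt1 hirr hdeg (by compute_degree!) hdvd
    · rintro ⟨t, ht⟩
      have hq : algebraMap K L ((b+t^2)/2) = -(α * β) := by
        have h1 : (2:K) * ((b+t^2)/2) = b + t^2 := by field_simp
        have h2 : algebraMap K L ((2:K) * ((b+t^2)/2)) = 2 * algebraMap K L ((b+t^2)/2) := by
          rw [map_mul, map_ofNat]
        apply mul_left_cancel₀ h2L
        rw [← h2, h1, map_add, map_pow, ht, hb]; ring
      have hgmap : (X^2 - C t * X + C ((b+t^2)/2)).map (algebraMap K L)
          = (X - C α) * (X + C β) := by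
        simp only [Polynomial.map_add, Polynomial.map_sub, Polynomial.map_mul,
          Polynomial.map_pow, map_X, map_C, ht, hq]
        rw [map_sub, map_neg, map_mul]
        ring
      have hdvd : (X^2 - C t * X + C ((b+t^2)/2)) ∣ (X^4 + C b * X^2 + C d) := by
        rw [← map_dvd_map' (algebraMap K L), hgmap, hroots]
        exact ⟨(X + C α) * (X - C β), by ring⟩
      exact aux_no_factor_stmt1 hirr hdeg (by compute_degree!) hdvd
  · rintro ⟨h1, h2, h3⟩
    by_contra hni
    have hP0 : (X ^ 4 + C b * X ^ 2 + C d) ≠ 0 := fun h => by rw [h] at hdeg; simp at hdeg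
    have hPu : ¬ IsUnit (X ^ 4 + C b * X ^ 2 + C d) := fun hu => by
      have := natDegree_eq_zero_of_isUnit hu; omega
    rw [irreducible_iff] at hni
    push_neg at hni
    obtain ⟨g, w, hgw, hgu, hwu⟩ := hni hPu
    have hg0 : g ≠ 0 := fun h => hP0 (by rw [hgw, h, zero_mul])
    have hw0 : w ≠ 0 := fun h => hP0 (by rw [hgw, h, mul_zero])
    have hdegs : g.natDegree + w.natDegree = 4 := by
      rw [← natDegree_mul hg0 hw0, ← hgw]
      exact hdeg
    have hgpos : 1 ≤ g.natDegree := by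
      rcases Nat.eq_zero_or_pos g.natDegree with h0 | h; swap
      · exact h
      exfalso
      have hC := eq_C_of_natDegree_eq_zero h0
      apply hgu
      rw [hC]
      refine isUnit_C.mpr (isUnit_iff_ne_zero.mpr ?_)
      intro hc; apply hg0; rw [hC, hc, map_zero]
    have hwpos : 1 ≤ w.natDegree := by
      rcases Nat.eq_zero_or_pos w.natDegree with h0 | h; swap
      · exact h
      exfalso
      have hC := eq_C_of_natDegree_eq_zero h0
      apply hwu
      rw [hC]
      refine isUnit_C.mpr (isUnit_iff_ne_zero.mpr ?_)
      intro hc; apply hw0; rw [hC, hc, map_zero]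
    obtain ⟨f, hfm, hfd, hfdeg⟩ : ∃ f : K[X], f.Monic ∧ f ∣ (X^4 + C b*X^2 + C d) ∧
        (f.natDegree = 1 ∨ f.natDegree = 2) := by
      rcases le_or_gt g.natDegree 2 with hle | hlt
      · refine ⟨g * C g.leadingCoeff⁻¹, monic_mul_leadingCoeff_inv hg0, ?_, ?_⟩
        · exact (IsUnit.mul_right_dvd (isUnit_C.mpr (isUnit_iff_ne_zero.mpr
            (inv_ne_zero (leadingCoeff_ne_zero.mpr hg0))))).mpr ⟨w, hgw⟩
        · rw [natDegree_mul_leadingCoeff_inv _ hg0]; omega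
      · refine ⟨w * C w.leadingCoeff⁻¹, monic_mul_leadingCoeff_inv hw0, ?_, ?_⟩
        · exact (IsUnit.mul_right_dvd (isUnit_C.mpr (isUnit_iff_ne_zero.mpr
            (inv_ne_zero (leadingCoeff_ne_zero.mpr hw0))))).mpr ⟨g, by rw [hgw]; ring⟩
        · rw [natDegree_mul_leadingCoeff_inv _ hw0]; omega
    rcases hfdeg with hdeg1 | hdeg2
    · -- linear factor: root in K
      have hf1 := aux_deg1_stmt1 hfm hdeg1
      obtain ⟨u, hu⟩ := hfd
      have hev : (-(f.coeff 0))^4 + b*(-(f.coeff 0))^2 + d = 0 := by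
        have hev0 : (X^4 + C b*X^2 + C d).eval (-(f.coeff 0)) = 0 := by
          rw [hu, eval_mul]
          have : f.eval (-(f.coeff 0)) = 0 := by rw [hf1]; simp
          rw [this, zero_mul]
        simpa using hev0
      exact h1 ⟨2*(-(f.coeff 0))^2 + b, by linear_combination 4*hev⟩
    · -- quadratic factor
      have hf2 := aux_deg2_stmt1 hfm hdeg2
      set p := f.coeff 1 with hpdef
      set q := f.coeff 0 with hqdef
      obtain ⟨w', hw'⟩ := hfd
      have hf0' : f ≠ 0 := hfm.ne_zero
      have hw'm : w'.Monic := hfm.of_mul_monic_left (hw' ▸ hmon)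
      have hw'0 : w' ≠ 0 := hw'm.ne_zero
      have hw'deg : w'.natDegree = 2 := by
        have h := natDegree_mul hf0' hw'0
        rw [← hw', hdeg, hdeg2] at h; omega
      have hwf2 := aux_deg2_stmt1 hw'm hw'deg
      set r := w'.coeff 1 with hrdef
      set s := w'.coeff 0 with hsdef
      have hexp : X^4 + C b * X^2 + C d
          = X^4 + C (p+r)*X^3 + C (q+s+p*r)*X^2 + C (p*s+q*r)*X + C (q*s) := by
        have h := hw'
        rw [hf2, hwf2] at h
        rw [h]
        simp only [map_add, map_mul]
        ring
      have e3 : (0:K) = p + r := by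
        have h := congrArg (fun t => t.coeff 3) hexp
        simp only [coeff_add, coeff_C_mul, coeff_X_pow, coeff_C, coeff_X] at h
        norm_num at h
        linear_combination h
      have e2 : b = q + s + p*r := by
        have h := congrArg (fun t => t.coeff 2) hexp
        simp only [coeff_add, coeff_C_mul, coeff_X_pow, coeff_C, coeff_X] at h
        norm_num at h
        linear_combination h
      have e1 : (0:K) = p*s + q*r := by
        have h := congrArg (fun t => t.coeff 1) hexp
        simp only [coeff_add, coeff_C_mul, coeff_X_pow, coeff_C, coeff_X] at h
        norm_num at h
        linear_combination h
      have e0 : d = q*s := by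
        have h := congrArg (fun t => t.coeff 0) hexp
        simp only [coeff_add, coeff_C_mul, coeff_X_pow, coeff_C, coeff_X] at h
        norm_num at h
        linear_combination h
      by_cases hp : p = 0
      · have hqs : q + s = b := by linear_combination -e2 - r*hp
        have hqs2 : q*s = d := by linear_combination -e0
        exact h1 ⟨q - s, by linear_combination (q+s+b)*hqs - 4*hqs2⟩
      · have hsq : s = q := by
          have hps : p*(s-q) = 0 := by linear_combination -e1 + q*e3
          exact sub_eq_zero.mp ((mul_eq_zero.mp hps).resolve_left hp)
        have hq2 : q^2 = d := by rw [hsq] at e0; linear_combination -e0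
        have hfmdvd : f.map (algebraMap K L) ∣ (X^4+C b*X^2+C d).map (algebraMap K L) :=
          (map_dvd_map' _).mpr ⟨w', hw'⟩
        have hXaC : ∀ γ : L, Splits (X + C γ) := fun γ =>
          Splits.of_natDegree_le_one (le_of_eq (natDegree_X_add_C γ))
        have hsplit : Splits ((X^4+C b*X^2+C d).map (algebraMap K L)) := by
          rw [hroots]
          exact Splits.mul (Splits.mul (Splits.mul (Splits.X_sub_C _) (hXaC α))
            (Splits.X_sub_C _)) (hXaC β)
        have hfms : Splits (f.map (algebraMap K L)) :=
          Splits.of_dvd hsplit (map_ne_zero hP0) hfmdvd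
        have hfmm : (f.map (algebraMap K L)).Monic := hfm.map _
        have hfmdeg : (f.map (algebraMap K L)).natDegree = 2 := by
          rw [hfm.natDegree_map]; exact hdeg2
        have hcard : (f.map (algebraMap K L)).roots.card = 2 := by
          rw [← hfmdeg]; exact (splits_iff_card_roots).mp hfms
        obtain ⟨r₁, r₂, hr12⟩ := Multiset.card_eq_two.mp hcard
        have hfmeq : f.map (algebraMap K L) = (X - C r₁) * (X - C r₂) := by
          have h := hfms.eq_prod_roots_of_monic hfmm
          rw [hr12] at h
          simpa using h
        have hfmC : f.map (algebraMap K L)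
            = X^2 + C (algebraMap K L p) * X + C (algebraMap K L q) := by
          rw [hf2]; simp
        have hkey := hfmC.symm.trans hfmeq
        have hRHS : (X - C r₁) * (X - C r₂) = X^2 - C (r₁+r₂) * X + C (r₁*r₂) := by
          simp only [map_add, map_mul]; ring
        rw [hRHS] at hkey
        have hfp : algebraMap K L p = -(r₁ + r₂) := by
          have h := congrArg (fun t => t.coeff 1) hkey
          simp only [coeff_add, coeff_sub, coeff_C_mul, coeff_X_pow, coeff_C, coeff_X] at h
          norm_num at h
          linear_combination h
        have hfq : algebraMap K L q = r₁ * r₂ := by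
          have h := congrArg (fun t => t.coeff 0) hkey
          simp only [coeff_add, coeff_sub, coeff_C_mul, coeff_X_pow, coeff_C, coeff_X] at h
          norm_num at h
          linear_combination h
        have hroot : ∀ x : L, (f.map (algebraMap K L)).eval x = 0 →
            (x-α)*(x+α)*(x-β)*(x+β) = 0 := by
          intro x hx
          obtain ⟨u, hu⟩ := hfmdvd
          have hPev : ((X^4+C b*X^2+C d).map (algebraMap K L)).eval x = 0 := by
            rw [hu, eval_mul, hx, zero_mul]
          rw [hroots] at hPev
          simpa using hPev
        have hr1 : r₁ = α ∨ r₁ = -α ∨ r₁ = β ∨ r₁ = -β :=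
          root_mem_stmt1 (hroot r₁ (by rw [hfmeq]; simp))
        have hr2 : r₂ = α ∨ r₂ = -α ∨ r₂ = β ∨ r₂ = -β :=
          root_mem_stmt1 (hroot r₂ (by rw [hfmeq]; simp))
        rcases hr1 with hs1 | hs1 | hs1 | hs1 <;> rcases hr2 with hs2 | hs2 | hs2 | hs2 <;>
          rw [hs1, hs2] at hfp hfq <;>
        first
        | (apply hp; apply inj; rw [map_zero]; linear_combination hfp)
        | (refine h2 ⟨-p, ?_⟩; rw [map_neg, hfp]; ring1)
        | (refine h2 ⟨p, ?_⟩; rw [hfp]; ring1)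
        | (refine h3 ⟨-p, ?_⟩; rw [map_neg, hfp]; ring1)
        | (refine h3 ⟨p, ?_⟩; rw [hfp]; ring1)
        | (have hα : α ≠ 0 := by intro h0; apply hp; apply inj; rw [map_zero, hfp, h0]; ring1
           have h4 : α^2*β^2 = α^2*α^2 := by rw [← hd, ← hq2, map_pow, hfq]; ring1
           rcases mul_eq_zero.mp (show (β-α)*(β+α) = (0:L) by
               linear_combination mul_left_cancel₀ (pow_ne_zero 2 hα) h4) with hc | hc
           · refine h3 ⟨0, ?_⟩; rw [map_zero]; linear_combination hc
           · refine h2 ⟨0, ?_⟩; rw [map_zero]; linear_combination -hc)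
        | (have hβ : β ≠ 0 := by intro h0; apply hp; apply inj; rw [map_zero, hfp, h0]; ring1
           have h4 : β^2*α^2 = β^2*β^2 := by
             rw [mul_comm (β^2) (α^2), ← hd, ← hq2, map_pow, hfq]; ring1
           rcases mul_eq_zero.mp (show (α-β)*(α+β) = (0:L) by
               linear_combination mul_left_cancel₀ (pow_ne_zero 2 hβ) h4) with hc | hc
           · refine h3 ⟨0, ?_⟩; rw [map_zero]; linear_combination -hc
           · refine h2 ⟨0, ?_⟩; rw [map_zero]; linear_combination -hc)
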